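/- Every graph sequence 𝒢 that has property A is hyperfinite. -/

import Mathlib

open Filter Topology

/-- A graph sequence: finite connected graphs of uniformly bounded degree whose
number of vertices tends to infinity. -/
structure GraphSeq (V : ℕ → Type*) where
  G : ∀ n, SimpleGraph (V n)
  finite : ∀ n, Finite (V n)
  connected : ∀ n, (G n).Connected
  degBound : ℕ
  deg_le : ∀ n, ∀ x : V n, ((G n).neighborSet x).ncard ≤ degBound
  card_tendsto : Tendsto (fun n => Nat.card (V n)) atTop atTop

/-- The edge number `e(𝒢) = liminf |E(G_n)|/|V(G_n)|`. -/
noncomputable def GraphSeq.edgeNumber {V : ℕ → Type*} (Gs : GraphSeq V) : ℝ :=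
  liminf (fun n => (((Gs.G n).edgeSet.ncard : ℝ)) / (Nat.card (V n) : ℝ)) atTop

/-- Bi-Lipschitz equivalence `𝒢 ≃ ℋ` of graph sequences on the same vertex sets. -/
def GraphSeq.equivSeq {V : ℕ → Type*} (Gs Hs : GraphSeq V) : Prop :=
  ∃ L : ℕ, 0 < L ∧ ∀ n, ∀ x y : V n,
    (Hs.G n).dist x y ≤ L * (Gs.G n).dist x y ∧
    (Gs.G n).dist x y ≤ L * (Hs.G n).dist x y

/-- The (combinatorial) cost `c(𝒢) = inf { e(ℋ) : ℋ ≃ 𝒢 }`. -/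
noncomputable def GraphSeq.cost {V : ℕ → Type*} (Gs : GraphSeq V) : ℝ :=
  sInf { x : ℝ | ∃ Hs : GraphSeq V, Gs.equivSeq Hs ∧ x = Hs.edgeNumber }

/-- Coarse equivalence of graph sequences: a uniform `(A,A)`-quasi-isometry levelwise. -/
def coarseEquiv {V W : ℕ → Type*} (Gs : GraphSeq V) (Hs : GraphSeq W) : Prop :=
  ∃ A : ℝ, 0 < A ∧ ∀ n, ∃ f : V n → W n,
    (∀ x y : V n,
      ((Gs.G n).dist x y : ℝ) / A - A ≤ ((Hs.G n).dist (f x) (f y) : ℝ) ∧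
      ((Hs.G n).dist (f x) (f y) : ℝ) ≤ A * ((Gs.G n).dist x y : ℝ) + A) ∧
    (∀ w : W n, ∃ x : V n, ((Hs.G n).dist (f x) w : ℝ) ≤ A)

/-- Hyperfiniteness of a family of graphs. -/
def hyperfiniteFam {V : ℕ → Type*} (G : ∀ n, SimpleGraph (V n)) : Prop :=
  ∀ ε : ℝ, 0 < ε → ∃ K : ℕ, 0 < K ∧ ∃ E : ∀ n, Set (Sym2 (V n)),
    (∀ n, E n ⊆ (G n).edgeSet) ∧
    limsup (fun n => (((E n).ncard : ℝ)) / (Nat.card (V n) : ℝ)) atTop < ε ∧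
    ∀ n, ∀ x : V n, {y | ((G n).deleteEdges (E n)).Reachable x y}.ncard ≤ K

def GraphSeq.hyperfinite {V : ℕ → Type*} (Gs : GraphSeq V) : Prop :=
  hyperfiniteFam Gs.G

/-- Property A for a family of graphs. -/
def propertyAFam {V : ℕ → Type*} (G : ∀ n, SimpleGraph (V n)) : Prop :=
  ∀ ε : ℝ, 0 < ε → ∃ S : ℕ, 0 < S ∧ ∀ n, ∃ ξ : V n → V n → ℝ,
    (∀ x, ∑ᶠ y, |ξ x y| = 1) ∧
    (∀ x y, ξ x y ≠ 0 → (G n).dist x y ≤ S) ∧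
    (∀ x y, (G n).Adj x y → ∑ᶠ z, |ξ x z - ξ y z| < ε)

def GraphSeq.propertyA {V : ℕ → Type*} (Gs : GraphSeq V) : Prop :=
  propertyAFam Gs.G

/-- Property almost-A: one may delete a vanishing proportion of vertices to get property A. -/
def GraphSeq.almostA {V : ℕ → Type*} (Gs : GraphSeq V) : Prop :=
  ∃ V' : ∀ n, Set (V n),
    Tendsto (fun n => (((V' n).ncard : ℝ)) / (Nat.card (V n) : ℝ)) atTop (𝓝 0) ∧
    propertyAFam (fun n => (Gs.G n).induce ((V' n)ᶜ))

/-- The set of edges of `G` with exactly one endpoint in `F`. -/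
def edgeBoundary {V : Type*} (G : SimpleGraph V) (F : Set V) : Set (Sym2 V) :=
  {e | e ∈ G.edgeSet ∧ ∃ x y, e = s(x, y) ∧ x ∈ F ∧ y ∉ F}

/-- The Cayley graph of a group with respect to a set `S`. -/
def cayleyGraph (Γ : Type*) [Group Γ] (S : Set Γ) : SimpleGraph Γ :=
  SimpleGraph.fromRel (fun x y => ∃ s ∈ S, y = x * s)

/-- The simple graph underlying an `S`-labelled graph given by label maps `lab`. -/
def labGraph {Γ V : Type*} (S : Set Γ) (lab : Γ → V → V) : SimpleGraph V :=
  SimpleGraph.fromRel (fun x y => ∃ s ∈ S, y = lab s x)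

/-- Right multiplication by `s` on the right cosets of `H`. -/
def schreierMul {Γ : Type*} [Group Γ] (H : Subgroup Γ) (s : Γ) :
    Quotient (QuotientGroup.rightRel H) → Quotient (QuotientGroup.rightRel H) :=
  Quotient.map (fun g => g * s) (fun a b hab => by
    have h := (QuotientGroup.rightRel_apply).mp hab
    exact (QuotientGroup.rightRel_apply).mpr (by
      simpa [mul_assoc] using h))

/-- The Schreier graph `Sch(Γ, H, S)` on the right cosets of `H`. -/
def schreierGraph {Γ : Type*} [Group Γ] (H : Subgroup Γ) (S : Set Γ) :
    SimpleGraph (Quotient (QuotientGroup.rightRel H)) :=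
  labGraph S (fun s => schreierMul H s)

/-- The rooted labelled `r`-ball of the labelled graph `lab` at `x` is isomorphic to
the `r`-ball around the identity in `Cay(Γ, S)`. -/
def ballIso {Γ : Type*} [Group Γ] (S : Set Γ) {V : Type*} (lab : Γ → V → V)
    (x : V) (r : ℕ) : Prop :=
  ∃ f : Γ → V, f 1 = x ∧
    (∀ g g' : Γ, (cayleyGraph Γ S).dist 1 g ≤ r → (cayleyGraph Γ S).dist 1 g' ≤ r →
      f g = f g' → g = g') ∧
    (∀ g : Γ, (cayleyGraph Γ S).dist 1 g < r → ∀ s ∈ S, f (g * s) = lab s (f g)) ∧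
    (∀ v : V, (labGraph S lab).dist x v ≤ r →
      ∃ g : Γ, (cayleyGraph Γ S).dist 1 g ≤ r ∧ f g = v)

/-- Benjamini–Schramm convergence of the `S`-labelled graphs given by `lab` to `Cay(Γ, S)`. -/
def BSConv {Γ : Type*} [Group Γ] (S : Set Γ) {V : ℕ → Type*}
    (lab : ∀ n, Γ → V n → V n) : Prop :=
  ∀ r : ℕ, Tendsto
    (fun n => ((Nat.card {x : V n // ballIso S (lab n) x r} : ℝ)) / (Nat.card (V n) : ℝ))
    atTop (𝓝 1)

/-- A sofic approximation of `Γ`: a graph sequence labelled by `S` which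
Benjamini–Schramm converges to `Cay(Γ, S)`. -/
def IsSoficApprox {Γ : Type*} [Group Γ] (S : Set Γ) {V : ℕ → Type*} (Gs : GraphSeq V)
    (lab : ∀ n, Γ → V n → V n) : Prop :=
  (∀ n, Gs.G n = labGraph S (lab n)) ∧ BSConv S lab

/-- Amenability via Følner sets with respect to the generating set `S`. -/
def FolnerAmenable {Γ : Type*} [Group Γ] (S : Set Γ) : Prop :=
  ∀ ε : ℝ, 0 < ε → ∃ F : Set Γ, F.Finite ∧ F.Nonempty ∧
    ∀ g ∈ S, ((symmDiff ((fun x => g * x) '' F) F).ncard : ℝ) < ε * (F.ncard : ℝ)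

section PropertyAHyperfinite
open MeasureTheory


lemma myIntegrableOn_ind (s : Set ℝ) (hs : MeasurableSet s) :
    IntegrableOn (s.indicator (fun _ => (1:ℝ))) (Set.Ioo 0 1) volume := by
  rw [IntegrableOn, integrable_indicator_iff hs]
  refine (integrableOn_const_iff (by simp)).mpr (Or.inr ?_)
  calc (volume.restrict (Set.Ioo (0:ℝ) 1)) s ≤ volume (Set.Ioo (0:ℝ) 1) := by
        rw [Measure.restrict_apply₀ hs.nullMeasurableSet]
        exact measure_mono Set.inter_subset_right
    _ = ENNReal.ofReal 1 := by rw [Real.volume_Ioo]; norm_num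
    _ < ⊤ := ENNReal.ofReal_lt_top

lemma myIntegral_ind_Iio {a : ℝ} (h0 : 0 ≤ a) (h1 : a ≤ 1) :
    ∫ t in Set.Ioo (0:ℝ) 1, (Set.Iio a).indicator (fun _ => (1:ℝ)) t = a := by
  rw [setIntegral_indicator measurableSet_Iio, setIntegral_const, smul_eq_mul, mul_one]
  have he : Set.Ioo (0:ℝ) 1 ∩ Set.Iio a = Set.Ioo 0 a := by
    ext t
    simp only [Set.mem_inter_iff, Set.mem_Ioo, Set.mem_Iio]
    constructor
    · rintro ⟨⟨h2, h3⟩, h4⟩; exact ⟨h2, h4⟩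
    · rintro ⟨h2, h3⟩; exact ⟨⟨h2, lt_of_lt_of_le h3 h1⟩, h3⟩
  rw [he, Real.volume_real_Ioo, sub_zero, max_eq_left h0]

lemma myIntegral_ind_Ico (a b : ℝ) :
    ∫ t in Set.Ioo (0:ℝ) 1, (Set.Ico b a).indicator (fun _ => (1:ℝ)) t ≤ |a - b| := by
  rw [setIntegral_indicator measurableSet_Ico, setIntegral_const, smul_eq_mul, mul_one]
  have h2 : volume (Set.Ioo (0:ℝ) 1 ∩ Set.Ico b a) ≤ ENNReal.ofReal (a - b) := by
    calc volume (Set.Ioo (0:ℝ) 1 ∩ Set.Ico b a) ≤ volume (Set.Ico b a) :=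
          measure_mono Set.inter_subset_right
      _ = ENNReal.ofReal (a - b) := Real.volume_Ico
  calc (volume (Set.Ioo (0:ℝ) 1 ∩ Set.Ico b a)).toReal
      ≤ (ENNReal.ofReal (a - b)).toReal := ENNReal.toReal_mono ENNReal.ofReal_ne_top h2
    _ ≤ |a - b| := by
        rcases le_or_gt (a - b) 0 with h | h
        · rw [ENNReal.ofReal_eq_zero.mpr h]; simp [abs_nonneg]
        · rw [ENNReal.toReal_ofReal h.le]; exact le_abs_self _

/-- Edges of `G` with one endpoint in `F` and the other in `U \ F`. -/
def bdryIn {V : Type} (G : SimpleGraph V) (U F : Set V) : Set (Sym2 V) :=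
  {e | e ∈ G.edgeSet ∧ ∃ x y, e = s(x, y) ∧ x ∈ F ∧ y ∈ U \ F}

lemma averaging {V : Type} [Fintype V] (G : SimpleGraph V) (d M : ℕ) (ε₀ : ℝ) (hε : 0 < ε₀)
    (hdeg : ∀ x, (G.neighborSet x).ncard ≤ d)
    (h : V → V → ℝ) (hpos : ∀ x z, 0 ≤ h x z)
    (U : Set V) (hUne : U.Nonempty)
    (hsum : ∀ x ∈ U, ∑ z, h x z = 1)
    (hgrad : ∀ x y, G.Adj x y → ∑ z, |h x z - h y z| ≤ ε₀)
    (hsupp : ∀ z, {x | h x z ≠ 0}.ncard ≤ M) :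
    ∃ F : Set V, F ⊆ U ∧ F.Nonempty ∧ F.ncard ≤ M ∧
      ((bdryIn G U F).ncard : ℝ) ≤ ε₀ * (d + 1) * F.ncard := by
  classical
  by_contra hcon
  push_neg at hcon
  set Uf : Finset V := Set.toFinset U with hUf
  have hmemUf : ∀ x, x ∈ Uf ↔ x ∈ U := by intro x; simp [hUf]
  set A : Finset (V × V) :=
    Finset.univ.filter (fun p : V × V => G.Adj p.1 p.2 ∧ p.1 ∈ U ∧ p.2 ∈ U) with hA
  have hle1 : ∀ x ∈ U, ∀ z, h x z ≤ 1 := by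
    intro x hx z
    rw [← hsum x hx]
    exact Finset.single_le_sum (fun i _ => hpos x i) (Finset.mem_univ z)
  set N : ℝ → ℝ :=
    fun t => ∑ z : V, ∑ x ∈ Uf, (Set.Iio (h x z)).indicator (fun _ => (1:ℝ)) t with hN
  set D : ℝ → ℝ :=
    fun t => ∑ z : V, ∑ p ∈ A, (Set.Ico (h p.2 z) (h p.1 z)).indicator (fun _ => (1:ℝ)) t with hD
  have hNint : IntegrableOn N (Set.Ioo 0 1) volume :=
    integrable_finset_sum _ (fun z _ =>
      integrable_finset_sum _ (fun x _ => myIntegrableOn_ind _ measurableSet_Iio))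
  have hDint : IntegrableOn D (Set.Ioo 0 1) volume :=
    integrable_finset_sum _ (fun z _ =>
      integrable_finset_sum _ (fun p _ => myIntegrableOn_ind _ measurableSet_Ico))
  -- value of ∫ N
  have hNval : ∫ t in Set.Ioo (0:ℝ) 1, N t = (Uf.card : ℝ) := by
    rw [hN, integral_finset_sum _ (fun z _ =>
      integrable_finset_sum _ (fun x _ => myIntegrableOn_ind _ measurableSet_Iio))]
    have h1 : ∀ z : V,
        ∫ t in Set.Ioo (0:ℝ) 1, ∑ x ∈ Uf, (Set.Iio (h x z)).indicator (fun _ => (1:ℝ)) t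
          = ∑ x ∈ Uf, h x z := by
      intro z
      rw [integral_finset_sum _ (fun x _ => myIntegrableOn_ind _ measurableSet_Iio)]
      refine Finset.sum_congr rfl (fun x hx => ?_)
      exact myIntegral_ind_Iio (hpos x _) (hle1 x ((hmemUf x).mp hx) _)
    rw [Finset.sum_congr rfl (fun z _ => h1 z), Finset.sum_comm]
    have h2 : ∀ x ∈ Uf, ∑ z : V, h x z = 1 := fun x hx => hsum x ((hmemUf x).mp hx)
    rw [Finset.sum_congr rfl h2, Finset.sum_const, nsmul_eq_mul, mul_one]
  -- bound on ∫ D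
  have hAcard : (A.card : ℝ) ≤ (d : ℝ) * Uf.card := by
    have hsub : A ⊆ Uf.biUnion (fun x => (G.neighborFinset x).image (fun y => (x, y))) := by
      intro p hp
      simp only [hA, Finset.mem_filter, Finset.mem_univ, true_and] at hp
      obtain ⟨hadj, h1, h2⟩ := hp
      refine Finset.mem_biUnion.mpr ⟨p.1, (hmemUf p.1).mpr h1, ?_⟩
      exact Finset.mem_image.mpr ⟨p.2, (SimpleGraph.mem_neighborFinset _ _ _).mpr hadj, rfl⟩
    have hnb : ∀ x : V, (G.neighborFinset x).card ≤ d := by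
      intro x
      rw [SimpleGraph.neighborFinset_def, ← Set.ncard_eq_toFinset_card']
      exact hdeg x
    have : A.card ≤ d * Uf.card := by
      calc A.card ≤ (Uf.biUnion (fun x => (G.neighborFinset x).image (fun y => (x, y)))).card :=
            Finset.card_le_card hsub
        _ ≤ ∑ x ∈ Uf, ((G.neighborFinset x).image (fun y => (x, y))).card :=
            Finset.card_biUnion_le
        _ ≤ ∑ x ∈ Uf, d :=
            Finset.sum_le_sum (fun x _ => le_trans Finset.card_image_le (hnb x))
        _ = d * Uf.card := by rw [Finset.sum_const, smul_eq_mul, mul_comm]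
    exact_mod_cast this
  have hDval : ∫ t in Set.Ioo (0:ℝ) 1, D t ≤ ε₀ * d * Uf.card := by
    rw [hD, integral_finset_sum _ (fun z _ =>
      integrable_finset_sum _ (fun p _ => myIntegrableOn_ind _ measurableSet_Ico))]
    calc ∑ z : V, ∫ t in Set.Ioo (0:ℝ) 1,
            ∑ p ∈ A, (Set.Ico (h p.2 z) (h p.1 z)).indicator (fun _ => (1:ℝ)) t
        ≤ ∑ z : V, ∑ p ∈ A, |h p.1 z - h p.2 z| := by
          refine Finset.sum_le_sum (fun z _ => ?_)
          rw [integral_finset_sum _ (fun p _ => myIntegrableOn_ind _ measurableSet_Ico)]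
          exact Finset.sum_le_sum (fun p _ => myIntegral_ind_Ico _ _)
      _ = ∑ p ∈ A, ∑ z : V, |h p.1 z - h p.2 z| := Finset.sum_comm
      _ ≤ ∑ p ∈ A, ε₀ := by
          refine Finset.sum_le_sum (fun p hp => ?_)
          simp only [hA, Finset.mem_filter, Finset.mem_univ, true_and] at hp
          exact hgrad _ _ hp.1
      _ = ε₀ * A.card := by rw [Finset.sum_const, nsmul_eq_mul, mul_comm]
      _ ≤ ε₀ * ((d:ℝ) * Uf.card) := mul_le_mul_of_nonneg_left hAcard hε.le
      _ = ε₀ * d * Uf.card := by ring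
  -- pointwise bound
  have hpoint : ∀ t ∈ Set.Ioo (0:ℝ) 1, ε₀ * (d + 1) * N t ≤ D t := by
    intro t ht
    have key : ∀ z : V,
        ε₀ * (d + 1) * ((Uf.filter (fun x => t < h x z)).card : ℝ)
          ≤ ((A.filter (fun p => h p.2 z ≤ t ∧ t < h p.1 z)).card : ℝ) := by
      intro z
      rcases Finset.eq_empty_or_nonempty (Uf.filter (fun x => t < h x z)) with he | hne
      · rw [he]
        simp only [Finset.card_empty, Nat.cast_zero, mul_zero]
        positivity
      · set Ff : Finset V := Uf.filter (fun x => t < h x z) with hFf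
        set Fs : Set V := (Ff : Set V) with hFs
        have hmemFs : ∀ x, x ∈ Fs ↔ x ∈ U ∧ t < h x z := by
          intro x
          rw [hFs, hFf]
          simp [hmemUf x]
        have hFU : Fs ⊆ U := fun x hx => ((hmemFs x).mp hx).1
        have hFM : Fs.ncard ≤ M := by
          refine le_trans (Set.ncard_le_ncard ?_ (Set.toFinite _)) (hsupp z)
          intro x hx
          have := ((hmemFs x).mp hx).2
          have : 0 < h x z := lt_trans ht.1 this
          exact ne_of_gt this
        have hlt := hcon Fs hFU (by exact_mod_cast hne) hFM
        have hinj : (bdryIn G U Fs).ncard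
            ≤ ((A.filter (fun p => h p.2 z ≤ t ∧ t < h p.1 z)).card : ℕ) := by
          have hsubim : bdryIn G U Fs ⊆
              (fun p : V × V => s(p.1, p.2)) ''
                ((A.filter (fun p => h p.2 z ≤ t ∧ t < h p.1 z)) : Set (V × V)) := by
            rintro e ⟨hee, x, y, rfl, hxF, hyU, hyF⟩
            refine ⟨(x, y), ?_, rfl⟩
            have hadj : G.Adj x y := G.mem_edgeSet.mp hee
            have hx' : t < h x z := ((hmemFs x).mp hxF).2
            have hy' : ¬ t < h y z := fun hc => hyF ((hmemFs y).mpr ⟨hyU, hc⟩)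
            simp only [Finset.coe_filter, Set.mem_setOf_eq, hA, Finset.mem_filter,
              Finset.mem_univ, true_and]
            exact ⟨⟨hadj, hFU hxF, hyU⟩, not_lt.mp hy', hx'⟩
          calc (bdryIn G U Fs).ncard
              ≤ ((fun p : V × V => s(p.1, p.2)) ''
                  ((A.filter (fun p => h p.2 z ≤ t ∧ t < h p.1 z)) : Set (V × V))).ncard :=
                Set.ncard_le_ncard hsubim (Set.toFinite _)
            _ ≤ (((A.filter (fun p => h p.2 z ≤ t ∧ t < h p.1 z)) : Set (V × V))).ncard :=
                Set.ncard_image_le (Set.toFinite _)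
            _ = (A.filter (fun p => h p.2 z ≤ t ∧ t < h p.1 z)).card :=
                Set.ncard_coe_finset _
        have hcard : (Ff.card : ℝ) = (Fs.ncard : ℝ) := by rw [hFs, Set.ncard_coe_finset]
        calc ε₀ * (d + 1) * (Ff.card : ℝ) = ε₀ * (d + 1) * (Fs.ncard : ℝ) := by rw [hcard]
          _ ≤ ((bdryIn G U Fs).ncard : ℝ) := (hlt).le
          _ ≤ ((A.filter (fun p => h p.2 z ≤ t ∧ t < h p.1 z)).card : ℝ) := by exact_mod_cast hinj
    have hNt : N t = ∑ z : V, ((Uf.filter (fun x => t < h x z)).card : ℝ) := by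
      rw [hN]
      refine Finset.sum_congr rfl (fun z _ => ?_)
      rw [Finset.card_filter]
      push_cast
      refine Finset.sum_congr rfl (fun x _ => ?_)
      simp [Set.indicator_apply, Set.mem_Iio]
    have hDt : D t = ∑ z : V, ((A.filter (fun p => h p.2 z ≤ t ∧ t < h p.1 z)).card : ℝ) := by
      rw [hD]
      refine Finset.sum_congr rfl (fun z _ => ?_)
      rw [Finset.card_filter]
      push_cast
      refine Finset.sum_congr rfl (fun p _ => ?_)
      simp [Set.indicator_apply, Set.mem_Ico]
    rw [hNt, hDt, Finset.mul_sum]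
    exact Finset.sum_le_sum (fun z _ => key z)
  -- combine
  have hmono : ∫ t in Set.Ioo (0:ℝ) 1, ε₀ * (d + 1) * N t ≤ ∫ t in Set.Ioo (0:ℝ) 1, D t :=
    setIntegral_mono_on (hNint.const_mul _) hDint measurableSet_Ioo hpoint
  rw [integral_const_mul, hNval] at hmono
  have hcardpos : (0:ℝ) < Uf.card := by
    have : Uf.Nonempty := by rwa [hUf, Set.toFinset_nonempty]
    exact_mod_cast Finset.card_pos.mpr this
  nlinarith [le_trans hmono hDval, mul_pos hε hcardpos]

lemma partitionLemma {V : Type} [Fintype V] (G : SimpleGraph V) (d M : ℕ) (ε₀ : ℝ)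
    (hε : 0 < ε₀) (hdeg : ∀ x, (G.neighborSet x).ncard ≤ d)
    (h : V → V → ℝ) (hpos : ∀ x z, 0 ≤ h x z) (hsum : ∀ x, ∑ z, h x z = 1)
    (hgrad : ∀ x y, G.Adj x y → ∑ z, |h x z - h y z| ≤ ε₀)
    (hsupp : ∀ z, {x | h x z ≠ 0}.ncard ≤ M) (U : Set V) :
    ∃ (C : Set (Sym2 V)) (f : V → Set V), C ⊆ G.edgeSet ∧
      ((C.ncard : ℝ)) ≤ ε₀ * (d + 1) * U.ncard ∧
      (∀ x ∈ U, x ∈ f x ∧ f x ⊆ U ∧ (f x).ncard ≤ M) ∧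
      (∀ x y, x ∈ U → y ∈ U → G.Adj x y → s(x, y) ∉ C → f x = f y) := by
  classical
  generalize hn : U.ncard = n
  induction n using Nat.strong_induction_on generalizing U with
  | _ n ih =>
    rcases Set.eq_empty_or_nonempty U with hU | hU
    · refine ⟨∅, fun _ => ∅, by simp, ?_, ?_, ?_⟩
      · simp only [Set.ncard_empty, Nat.cast_zero]
        positivity
      · intro x hx; exact absurd (hU ▸ hx) (Set.notMem_empty x)
      · intro x y hx _ _ _; exact absurd (hU ▸ hx) (Set.notMem_empty x)
    · obtain ⟨F, hFU, hFne, hFM, hFbd⟩ :=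
        averaging G d M ε₀ hε hdeg h hpos U hU (fun x _ => hsum x) hgrad hsupp
      have hFcard : 1 ≤ F.ncard := (Set.ncard_pos (Set.toFinite _)).mpr hFne
      have hFle : F.ncard ≤ U.ncard := Set.ncard_le_ncard hFU (Set.toFinite _)
      have hdiff : (U \ F).ncard = U.ncard - F.ncard := Set.ncard_diff hFU (Set.toFinite _)
      have hnpos : 1 ≤ n := by rw [← hn]; exact le_trans hFcard hFle
      have hlt : (U \ F).ncard < n := by rw [hdiff, hn] at *; omega
      obtain ⟨C', f', hC'sub, hC'card, hf'mem, hf'edge⟩ :=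
        ih (U \ F).ncard hlt (U \ F) rfl
      refine ⟨bdryIn G U F ∪ C', fun x => if x ∈ F then F else f' x, ?_, ?_, ?_, ?_⟩
      · intro e he
        rcases he with he | he
        · exact he.1
        · exact hC'sub he
      · calc ((bdryIn G U F ∪ C').ncard : ℝ)
            ≤ ((bdryIn G U F).ncard : ℝ) + (C'.ncard : ℝ) := by
              exact_mod_cast Set.ncard_union_le _ _
          _ ≤ ε₀ * (d + 1) * F.ncard + ε₀ * (d + 1) * (U \ F).ncard := add_le_add hFbd hC'card
          _ = ε₀ * (d + 1) * ((F.ncard : ℝ) + ((U \ F).ncard : ℝ)) := by ring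
          _ = ε₀ * (d + 1) * (U.ncard : ℝ) := by
              congr 1
              rw [hdiff, Nat.cast_sub hFle]
              ring
          _ = ε₀ * (d + 1) * (n : ℝ) := by rw [hn]
      · intro x hx
        dsimp only
        by_cases hxF : x ∈ F
        · rw [if_pos hxF]
          exact ⟨hxF, hFU, hFM⟩
        · rw [if_neg hxF]
          obtain ⟨h1, h2, h3⟩ := hf'mem x ⟨hx, hxF⟩
          exact ⟨h1, fun w hw => (h2 hw).1, h3⟩
      · intro x y hx hy hadj hC
        dsimp only
        have hC1 : s(x, y) ∉ bdryIn G U F := fun hc => hC (Or.inl hc)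
        have hC2 : s(x, y) ∉ C' := fun hc => hC (Or.inr hc)
        by_cases hxF : x ∈ F <;> by_cases hyF : y ∈ F
        · rw [if_pos hxF, if_pos hyF]
        · exact absurd ⟨G.mem_edgeSet.mpr hadj, x, y, rfl, hxF, ⟨hy, hyF⟩⟩ hC1
        · exact absurd ⟨G.mem_edgeSet.mpr hadj, y, x, Sym2.eq_swap, hyF, ⟨hx, hxF⟩⟩ hC1
        · rw [if_neg hxF, if_neg hyF]
          exact hf'edge x y ⟨hx, hxF⟩ ⟨hy, hyF⟩ hadj hC2

lemma ball_card_le {V : Type} [Fintype V] (G : SimpleGraph V) (hconn : G.Connected) (d : ℕ)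
    (hdeg : ∀ x, (G.neighborSet x).ncard ≤ d) (z : V) :
    ∀ S : ℕ, {x | G.dist z x ≤ S}.ncard ≤ (d + 1) ^ S := by
  classical
  have hnb : ∀ x : V, (G.neighborFinset x).card ≤ d := by
    intro x
    rw [SimpleGraph.neighborFinset_def, ← Set.ncard_eq_toFinset_card']
    exact hdeg x
  have hcardeq : ∀ S : ℕ, {x | G.dist z x ≤ S}.ncard
      = (Finset.univ.filter (fun x => G.dist z x ≤ S)).card := by
    intro S
    rw [Set.ncard_eq_toFinset_card', Set.toFinset_setOf]
  intro S
  induction S with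
  | zero =>
    rw [hcardeq]
    have hsub : (Finset.univ.filter (fun x => G.dist z x ≤ 0)) ⊆ {z} := by
      intro x hx
      simp only [Finset.mem_filter, Finset.mem_univ, true_and, Nat.le_zero] at hx
      have := SimpleGraph.dist_eq_zero_iff_eq_or_not_reachable.mp hx
      rcases this with h | h
      · simp [h]
      · exact absurd (hconn.preconnected z x) h
    calc (Finset.univ.filter (fun x => G.dist z x ≤ 0)).card ≤ ({z} : Finset V).card :=
          Finset.card_le_card hsub
      _ = 1 := Finset.card_singleton z
      _ ≤ (d + 1) ^ 0 := by simp
  | succ S ihS =>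
    rw [hcardeq] at *
    set B : ℕ → Finset V := fun r => Finset.univ.filter (fun x => G.dist z x ≤ r) with hB
    have hsub : B (S + 1) ⊆ B S ∪ (B S).biUnion (fun y => G.neighborFinset y) := by
      intro x hx
      simp only [hB, Finset.mem_filter, Finset.mem_univ, true_and] at hx
      by_cases hxS : G.dist z x ≤ S
      · exact Finset.mem_union_left _ (by simp [hB, hxS])
      · have hdist : G.dist z x = S + 1 := le_antisymm hx (by omega)
        have hreach : G.Reachable z x := hconn.preconnected z x
        obtain ⟨p, hp⟩ := hreach.exists_walk_length_eq_dist
        rw [hdist] at hp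
        -- decompose from the x-side
        obtain ⟨b, hadj, q, hq⟩ :
            ∃ (b : V) (hadj : G.Adj x b) (q : G.Walk b z),
              p.reverse = SimpleGraph.Walk.cons hadj q := by
          cases hq : p.reverse with
          | nil =>
            exfalso
            have := congrArg SimpleGraph.Walk.length hq
            rw [SimpleGraph.Walk.length_reverse, hp] at this
            simp at this
          | cons hadj q => exact ⟨_, hadj, q, rfl⟩
        refine Finset.mem_union_right _ (Finset.mem_biUnion.mpr ⟨b, ?_, ?_⟩)
        · simp only [hB, Finset.mem_filter, Finset.mem_univ, true_and]
          have hlen : q.reverse.length = S := by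
            have := congrArg SimpleGraph.Walk.length hq
            rw [SimpleGraph.Walk.length_reverse, hp] at this
            simp only [SimpleGraph.Walk.length_cons] at this
            rw [SimpleGraph.Walk.length_reverse]
            omega
          calc G.dist z b ≤ q.reverse.length := SimpleGraph.dist_le _
            _ = S := hlen
        · rw [SimpleGraph.mem_neighborFinset]
          exact hadj.symm
    calc (B (S + 1)).card ≤ (B S ∪ (B S).biUnion (fun y => G.neighborFinset y)).card :=
          Finset.card_le_card hsub
      _ ≤ (B S).card + ((B S).biUnion (fun y => G.neighborFinset y)).card :=
          Finset.card_union_le _ _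
      _ ≤ (B S).card + ∑ y ∈ B S, (G.neighborFinset y).card :=
          Nat.add_le_add_left Finset.card_biUnion_le _
      _ ≤ (B S).card + ∑ y ∈ B S, d :=
          Nat.add_le_add_left (Finset.sum_le_sum (fun y _ => hnb y)) _
      _ = (B S).card * (d + 1) := by rw [Finset.sum_const, smul_eq_mul]; ring
      _ ≤ (d + 1) ^ S * (d + 1) := Nat.mul_le_mul_right _ ihS
      _ = (d + 1) ^ (S + 1) := by rw [pow_succ]

lemma reach_cluster {V : Type} (G : SimpleGraph V) (C : Set (Sym2 V)) (f : V → Set V)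
    (hf : ∀ x y, G.Adj x y → s(x, y) ∉ C → f x = f y) :
    ∀ x y : V, (G.deleteEdges C).Reachable x y → f x = f y := by
  intro x y hr
  obtain ⟨w⟩ := hr
  induction w with
  | nil => rfl
  | cons hadj p ih =>
    rw [SimpleGraph.deleteEdges_adj] at hadj
    exact (hf _ _ hadj.1 hadj.2).trans ih


lemma perGraph {V : Type} [Fintype V] (G : SimpleGraph V) (hconn : G.Connected) (d S : ℕ)
    (hdeg : ∀ x, (G.neighborSet x).ncard ≤ d) (ε₀ : ℝ) (hε : 0 < ε₀) (ξ : V → V → ℝ)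
    (h1 : ∀ x, ∑ᶠ z, |ξ x z| = 1) (h2 : ∀ x z, ξ x z ≠ 0 → G.dist x z ≤ S)
    (h3 : ∀ x y, G.Adj x y → ∑ᶠ z, |ξ x z - ξ y z| < ε₀) :
    ∃ C : Set (Sym2 V), C ⊆ G.edgeSet ∧
      ((C.ncard : ℝ)) ≤ ε₀ * (d + 1) * (Nat.card V : ℝ) ∧
      ∀ x : V, {y | (G.deleteEdges C).Reachable x y}.ncard ≤ (d + 1) ^ S := by
  classical
  set h : V → V → ℝ := fun x z => |ξ x z| with hh
  have hpos : ∀ x z, 0 ≤ h x z := fun x z => abs_nonneg _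
  have hsum : ∀ x, ∑ z, h x z = 1 := by
    intro x; rw [← finsum_eq_sum_of_fintype]; exact h1 x
  have hgrad : ∀ x y, G.Adj x y → ∑ z, |h x z - h y z| ≤ ε₀ := by
    intro x y hadj
    have : ∑ z, |h x z - h y z| ≤ ∑ z, |ξ x z - ξ y z| :=
      Finset.sum_le_sum (fun z _ => abs_abs_sub_abs_le_abs_sub _ _)
    refine le_trans this (le_of_lt ?_)
    rw [← finsum_eq_sum_of_fintype]
    exact h3 x y hadj
  have hsupp : ∀ z, {x | h x z ≠ 0}.ncard ≤ (d + 1) ^ S := by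
    intro z
    refine le_trans (Set.ncard_le_ncard ?_ (Set.toFinite _)) (ball_card_le G hconn d hdeg z S)
    intro x hx
    have hne : ξ x z ≠ 0 := by
      intro hc
      exact hx (by simp [hh, hc])
    have := h2 x z hne
    show G.dist z x ≤ S
    rwa [SimpleGraph.dist_comm]
  obtain ⟨C, f, hCsub, hCcard, hfmem, hfedge⟩ :=
    partitionLemma G d ((d + 1) ^ S) ε₀ hε hdeg h hpos hsum hgrad hsupp Set.univ
  refine ⟨C, hCsub, ?_, ?_⟩
  · rwa [Set.ncard_univ] at hCcard
  · intro x
    have hsub : {y | (G.deleteEdges C).Reachable x y} ⊆ f x := by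
      intro y hy
      have hedge : ∀ a b, G.Adj a b → s(a, b) ∉ C → f a = f b :=
        fun a b hab hnc => hfedge a b (Set.mem_univ a) (Set.mem_univ b) hab hnc
      have hxy := reach_cluster G C f hedge x y hy
      rw [hxy]
      exact (hfmem y (Set.mem_univ y)).1
    exact le_trans (Set.ncard_le_ncard hsub (Set.toFinite _)) (hfmem x (Set.mem_univ x)).2.2

end PropertyAHyperfinite

/-- Every graph sequence with property A is hyperfinite. -/
theorem stmt10 {V : ℕ → Type} (Gs : GraphSeq V) (hA : Gs.propertyA) :
    Gs.hyperfinite := by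
  intro ε hε
  classical
  set d := Gs.degBound with hd
  set ε₀ : ℝ := ε / (2 * ((d : ℝ) + 1)) with hε₀def
  have hε₀ : 0 < ε₀ := by
    rw [hε₀def]
    positivity
  obtain ⟨S, hS, hξ⟩ := hA ε₀ hε₀
  refine ⟨(d + 1) ^ S, pow_pos (Nat.succ_pos d) S, ?_⟩
  have key : ∀ n, ∃ C : Set (Sym2 (V n)), C ⊆ (Gs.G n).edgeSet ∧
      ((C.ncard : ℝ)) ≤ ε₀ * (d + 1) * (Nat.card (V n) : ℝ) ∧
      ∀ x : V n, {y | ((Gs.G n).deleteEdges C).Reachable x y}.ncard ≤ (d + 1) ^ S := by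
    intro n
    haveI := Gs.finite n
    haveI : Fintype (V n) := Fintype.ofFinite _
    obtain ⟨ξ, hξ1, hξ2, hξ3⟩ := hξ n
    exact perGraph (Gs.G n) (Gs.connected n) d S (Gs.deg_le n) ε₀ hε₀ ξ hξ1 hξ2 hξ3
  choose E hE1 hE2 hE3 using key
  refine ⟨E, hE1, ?_, hE3⟩
  have hub : ∀ n, ((E n).ncard : ℝ) / (Nat.card (V n) : ℝ) ≤ ε / 2 := by
    intro n
    haveI := Gs.finite n
    have hne : Nonempty (V n) := (Gs.connected n).nonempty
    have hpos : (0 : ℝ) < (Nat.card (V n) : ℝ) := by exact_mod_cast Nat.card_pos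
    rw [div_le_iff₀ hpos]
    calc ((E n).ncard : ℝ) ≤ ε₀ * (d + 1) * (Nat.card (V n) : ℝ) := hE2 n
      _ = ε / 2 * (Nat.card (V n) : ℝ) := by
          rw [hε₀def]
          have hd1 : ((d : ℝ) + 1) ≠ 0 := by positivity
          field_simp
  have hnn : ∀ n, (0 : ℝ) ≤ ((E n).ncard : ℝ) / (Nat.card (V n) : ℝ) :=
    fun n => div_nonneg (by positivity) (by positivity)
  have hcb : Filter.IsCoboundedUnder (· ≤ ·) Filter.atTop
      (fun n => ((E n).ncard : ℝ) / (Nat.card (V n) : ℝ)) :=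
    Filter.isCoboundedUnder_le_of_le Filter.atTop hnn
  have hls : Filter.limsup (fun n => ((E n).ncard : ℝ) / (Nat.card (V n) : ℝ)) Filter.atTop
      ≤ ε / 2 :=
    Filter.limsup_le_of_le hcb (Filter.Eventually.of_forall hub)
  calc Filter.limsup (fun n => ((E n).ncard : ℝ) / (Nat.card (V n) : ℝ)) Filter.atTop
      ≤ ε / 2 := hls
    _ < ε := by linarith
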